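/- Let p be a prime, M an integer, s ≥ 1 an integer, and a_0, ..., a_{s-1} integers not all divisible by p. Then the rational function F(V) = Σ_{j=0}^{s-1} a_j/(V+M+j) over F_p is a nonconstant rational function, and consequently every residue class modulo p is attained by F(v) for at most O(s) values of v ∈ F_p in the domain of F. -/
import Mathlib

open Polynomial Finset in
private lemma rfnf_cast_sub_ne {p : ℕ} [Fact p.Prime] {s j k : ℕ} (hsp : s < p)
    (hj : j < s) (hk : k < s) (hne : k ≠ j) (M : ℤ) :
    -((M + j : ℤ) : ZMod p) + ((M + k : ℤ) : ZMod p) ≠ 0 := by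
  have he : -((M + j : ℤ) : ZMod p) + ((M + k : ℤ) : ZMod p) = (((k : ℤ) - j : ℤ) : ZMod p) := by
    push_cast; ring
  rw [he, Ne, ZMod.intCast_zmod_eq_zero_iff_dvd]
  intro h
  have h2 := Int.natAbs_dvd_natAbs.mpr h
  simp only [Int.natAbs_natCast] at h2
  have hpos : 0 < ((k : ℤ) - j).natAbs := by omega
  have := Nat.le_of_dvd hpos h2
  omega

open Polynomial Finset in
private lemma rfnf_main {p s : ℕ} [Fact p.Prime]
    (hs1 : 1 ≤ s) (hsp : s < p) (M : ℤ) (a : ℕ → ℤ)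
    {j0 : ℕ} (hj0s : j0 < s) (hj0 : ¬ (p : ℤ) ∣ a j0) :
    eval (-((M + j0 : ℤ) : ZMod p))
      (∑ j ∈ range s, C ((a j : ℤ) : ZMod p) *
        ∏ k ∈ (range s).erase j, (X + C ((M + k : ℤ) : ZMod p))) ≠ 0 ∧
    eval (-((M + j0 : ℤ) : ZMod p))
      (∏ k ∈ range s, (X + C ((M + k : ℤ) : ZMod p))) = 0 := by
  set x0 : ZMod p := -((M + j0 : ℤ) : ZMod p) with hx0
  have hfj : ∀ k, eval x0 (X + C ((M + k : ℤ) : ZMod p)) = x0 + ((M + k : ℤ) : ZMod p) := by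
    intro k; simp
  have hfj0 : eval x0 (X + C ((M + j0 : ℤ) : ZMod p)) = 0 := by
    rw [hfj, hx0]; ring
  have hfne : ∀ k ∈ range s, k ≠ j0 → eval x0 (X + C ((M + k : ℤ) : ZMod p)) ≠ 0 := by
    intro k hk hne
    rw [hfj]
    exact rfnf_cast_sub_ne hsp hj0s (mem_range.mp hk) hne M
  constructor
  · rw [eval_finset_sum]
    rw [Finset.sum_eq_single j0]
    · rw [eval_mul, eval_C, eval_prod]
      apply mul_ne_zero
      · rw [Ne, ZMod.intCast_zmod_eq_zero_iff_dvd]; exact hj0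
      · exact Finset.prod_ne_zero_iff.mpr fun k hk =>
          hfne k (mem_of_mem_erase hk) (ne_of_mem_erase hk)
    · intro j hj hjne
      rw [eval_mul, eval_prod]
      apply mul_eq_zero_of_right
      exact Finset.prod_eq_zero (Finset.mem_erase.mpr ⟨fun h => hjne h.symm, mem_range.mpr hj0s⟩) hfj0
    · intro h; exact absurd (mem_range.mpr hj0s) h
  · rw [eval_prod]
    exact Finset.prod_eq_zero (mem_range.mpr hj0s) hfj0

open Classical in
theorem rational_function_nonconstant_and_fibers (p s : ℕ) [hp : Fact p.Prime]
    (hs1 : 1 ≤ s) (hsp : s < p) (M : ℤ) (a : ℕ → ℤ)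
    (ha : ∃ j < s, ¬ (p : ℤ) ∣ a j) :
    (∀ c : ZMod p,
      (∑ j ∈ Finset.range s,
        RatFunc.C ((a j : ℤ) : ZMod p) /
          (RatFunc.X + RatFunc.C (((M + j : ℤ)) : ZMod p))) ≠ RatFunc.C c) ∧
    ∀ c : ZMod p,
      ((Finset.univ.filter (fun v : ZMod p =>
        (∀ j ∈ Finset.range s, v + ((M + j : ℤ) : ZMod p) ≠ 0) ∧
        ∑ j ∈ Finset.range s,
          ((a j : ℤ) : ZMod p) * (v + ((M + j : ℤ) : ZMod p))⁻¹ = c)).card) ≤ 2 * s := by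
  classical
  open Polynomial Finset in
  obtain ⟨j0, hj0s, hj0⟩ := ha
  set K := ZMod p with hK
  set f : ℕ → K[X] := fun j => X + C ((M + j : ℤ) : K) with hf
  set P : K[X] := ∏ k ∈ range s, f k with hP
  set Q1 : K[X] := ∑ j ∈ range s, C ((a j : ℤ) : K) * ∏ k ∈ (range s).erase j, f k with hQ1
  obtain ⟨hQ1ne, hPzero⟩ := rfnf_main hs1 hsp M a hj0s hj0
  -- f j is nonzero
  have hfne0 : ∀ j, f j ≠ 0 := fun j => X_add_C_ne_zero _
  -- degrees
  have hQ1ne' : eval (-((M + j0 : ℤ) : K)) Q1 ≠ 0 := hQ1ne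
  have hPzero' : eval (-((M + j0 : ℤ) : K)) P = 0 := hPzero
  have hPdeg : P.natDegree ≤ s := by
    refine le_trans (natDegree_prod_le _ _) ?_
    refine le_trans (Finset.sum_le_sum (fun k _ => le_of_eq (natDegree_X_add_C ((M + k : ℤ) : K)))) ?_
    simp
  have hQ1deg : Q1.natDegree ≤ s := by
    refine natDegree_sum_le_of_forall_le _ _ ?_
    intro j hj
    refine le_trans (natDegree_C_mul_le _ _) (le_trans (natDegree_prod_le _ _) ?_)
    refine le_trans (Finset.sum_le_sum (fun k _ => le_of_eq (natDegree_X_add_C ((M + k : ℤ) : K)))) ?_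
    refine le_trans (Finset.sum_le_sum_of_subset (Finset.erase_subset _ _)) ?_
    simp
  constructor
  · -- nonconstant
    intro c hFc
    have halg : ∀ j, algebraMap K[X] (RatFunc K) (f j) =
        RatFunc.X + RatFunc.C ((M + j : ℤ) : K) := by
      intro j; simp [hf]
    have halgne : ∀ j, algebraMap K[X] (RatFunc K) (f j) ≠ 0 := by
      intro j
      simpa using (RatFunc.algebraMap_ne_zero (hfne0 j))
    have key : (∑ j ∈ range s, RatFunc.C ((a j : ℤ) : K) /
          (RatFunc.X + RatFunc.C ((M + j : ℤ) : K))) * algebraMap K[X] (RatFunc K) P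
        = algebraMap K[X] (RatFunc K) Q1 := by
      rw [Finset.sum_mul, hQ1, map_sum]
      apply Finset.sum_congr rfl
      intro j hj
      rw [← halg j]
      have hPfac : P = f j * ∏ k ∈ (range s).erase j, f k :=
        (Finset.mul_prod_erase _ _ hj).symm
      rw [hPfac, map_mul, map_mul, ← RatFunc.algebraMap_C (((a j : ℤ) : K))]
      rw [mul_comm ((algebraMap K[X] (RatFunc K)) (f j)), div_mul_eq_mul_div,
        mul_div_assoc, mul_div_assoc, div_self (halgne j), mul_one]
    rw [hFc] at key
    have key2 : algebraMap K[X] (RatFunc K) (C c * P) = algebraMap K[X] (RatFunc K) Q1 := by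
      rw [map_mul, RatFunc.algebraMap_C]; exact key
    have heq := RatFunc.algebraMap_injective K key2
    exact hQ1ne' (by rw [← heq, eval_mul, eval_C, hPzero', mul_zero])
  · -- fibers
    intro c
    set Q : K[X] := Q1 - C c * P with hQdef
    have hQne : Q ≠ 0 := by
      intro h
      have : eval (-((M + j0 : ℤ) : K)) Q = 0 := by rw [h]; simp
      rw [hQdef, eval_sub, eval_mul, eval_C, hPzero', mul_zero, sub_zero] at this
      exact hQ1ne' this
    have hQdeg : Q.natDegree ≤ s := by
      refine le_trans (natDegree_sub_le _ _) ?_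
      exact max_le hQ1deg (le_trans (natDegree_C_mul_le _ _) hPdeg)
    have hsub : (Finset.univ.filter (fun v : K =>
        (∀ j ∈ Finset.range s, v + ((M + j : ℤ) : K) ≠ 0) ∧
        ∑ j ∈ Finset.range s,
          ((a j : ℤ) : K) * (v + ((M + j : ℤ) : K))⁻¹ = c)) ⊆ Q.roots.toFinset := by
      intro v hv
      simp only [Finset.mem_filter, Finset.mem_univ, true_and] at hv
      obtain ⟨hden, hsum⟩ := hv
      rw [Multiset.mem_toFinset, mem_roots hQne]
      have hevf : ∀ j, eval v (f j) = v + ((M + j : ℤ) : K) := by intro j; simp [hf]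
      have hPv : eval v P = ∏ k ∈ range s, (v + ((M + k : ℤ) : K)) := by
        rw [hP, eval_prod]; exact Finset.prod_congr rfl fun k _ => hevf k
      have hQ1v : eval v Q1 = c * eval v P := by
        rw [hQ1, eval_finset_sum, ← hsum, Finset.sum_mul]
        apply Finset.sum_congr rfl
        intro j hj
        rw [eval_mul, eval_C, eval_prod]
        have hfacj : (v + ((M + j : ℤ) : K)) * ∏ k ∈ (range s).erase j, (v + ((M + k : ℤ) : K))
            = ∏ k ∈ range s, (v + ((M + k : ℤ) : K)) :=
          Finset.mul_prod_erase (range s) (fun k => v + ((M + k : ℤ) : K)) hj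
        have hvj : v + ((M + j : ℤ) : K) ≠ 0 := hden j hj
        rw [mul_assoc]
        congr 1
        rw [Finset.prod_congr rfl (fun k _ => hevf k), hPv, eq_inv_mul_iff_mul_eq₀ hvj]
        exact hfacj
      show Q.IsRoot v
      rw [IsRoot, hQdef, eval_sub, eval_mul, eval_C, hQ1v, sub_self]
    calc (Finset.univ.filter _).card ≤ Q.roots.toFinset.card := Finset.card_le_card hsub
      _ ≤ Multiset.card Q.roots := Q.roots.toFinset_card_le
      _ ≤ Q.natDegree := Polynomial.card_roots' Q
      _ ≤ s := hQdeg
      _ ≤ 2 * s := by omega
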